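/- For n > 1 and any k ∈ ℕ, there is no linear isometric embedding of ℓ¹(n) into the k×k complex matrices M_k with the operator norm. In particular, there do not exist T₁, T₂ ∈ M_k such that ‖a₁T₁ + a₂T₂‖ = |a₁| + |a₂| for all a₁, a₂ ∈ ℂ. -/

import Mathlib

lemma normAttain {E : Type*} [NormedAddCommGroup E] [NormedSpace ℂ E] [FiniteDimensional ℂ E]
    [Nontrivial E] (C : E →L[ℂ] E) : ∃ x : E, ‖x‖ = 1 ∧ ‖C x‖ = ‖C‖ := by
  have hcs : IsCompact (Metric.sphere (0:E) 1) := isCompact_sphere _ _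
  have hne : (Metric.sphere (0:E) 1).Nonempty := NormedSpace.sphere_nonempty.mpr zero_le_one
  obtain ⟨x, hx, hmax⟩ := hcs.exists_isMaxOn hne
    ((continuous_norm.comp C.continuous).continuousOn)
  rw [mem_sphere_zero_iff_norm] at hx
  refine ⟨x, hx, le_antisymm (by simpa [hx] using C.le_opNorm x) ?_⟩
  refine C.opNorm_le_bound (norm_nonneg _) fun y => ?_
  rcases eq_or_ne y 0 with rfl | hy
  · simp
  · have hyn : ‖y‖ ≠ 0 := norm_ne_zero_iff.mpr hy
    have h1 : ((‖y‖:ℂ))⁻¹ • y ∈ Metric.sphere (0:E) 1 := by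
      simp [mem_sphere_zero_iff_norm, norm_smul, inv_mul_cancel₀ hyn]
    have h2 : ‖C (((‖y‖:ℂ))⁻¹ • y)‖ ≤ ‖C x‖ := hmax h1
    rw [map_smul, norm_smul] at h2
    simp only [norm_inv, Complex.norm_real, norm_norm] at h2
    calc ‖C y‖ = ‖y‖ * (‖y‖⁻¹ * ‖C y‖) := by field_simp
    _ ≤ ‖y‖ * ‖C x‖ := by nlinarith [norm_nonneg y]
    _ = ‖C x‖ * ‖y‖ := mul_comm _ _

lemma core' {E : Type*} [NormedAddCommGroup E] [InnerProductSpace ℂ E]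
    [FiniteDimensional ℂ E] [Nontrivial E] [CompleteSpace E] (A B : E →L[ℂ] E)
    (h' : ∀ a₁ a₂ : ℂ, ‖a₁ • A + a₂ • B‖ = ‖a₁‖ + ‖a₂‖) : False := by
  have hAn : ‖A‖ = 1 := by
    have := h' 1 0
    simp only [one_smul, zero_smul, add_zero, norm_one, norm_zero] at this
    exact this
  have hBn : ‖B‖ = 1 := by
    have := h' 0 1
    simp only [one_smul, zero_smul, zero_add, norm_one, norm_zero] at this
    exact this
  obtain ⟨S, hS⟩ : ∃ S : E →L[ℂ] E, S = (ContinuousLinearMap.adjoint B).comp A := ⟨_, rfl⟩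
  have key : ∀ w : ℂ, ‖w‖ = 1 → ∃ x : E, x ≠ 0 ∧ S x = w • x := by
    intro w hw
    have h2 : ‖A + w • B‖ = 2 := by
      have := h' 1 w
      simp only [one_smul, norm_one, hw] at this
      linarith
    obtain ⟨x, hx1, hx2⟩ := normAttain (A + w • B)
    rw [h2] at hx2
    have hux : (A + w • B) x = A x + w • B x := by
      simp [ContinuousLinearMap.add_apply, ContinuousLinearMap.smul_apply]
    rw [hux] at hx2
    have hu : ‖A x‖ ≤ 1 := by
      have := A.le_opNorm x
      rw [hAn, hx1] at this
      simpa using this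
    have hBx : ‖B x‖ ≤ 1 := by
      have := B.le_opNorm x
      rw [hBn, hx1] at this
      simpa using this
    have hv : ‖w • B x‖ ≤ 1 := by rw [norm_smul, hw, one_mul]; exact hBx
    have hvge : (1:ℝ) ≤ ‖w • B x‖ := by
      have := norm_add_le (A x) (w • B x)
      linarith
    have hv1 : ‖w • B x‖ = 1 := le_antisymm hv hvge
    have hBx1 : ‖B x‖ = 1 := by rwa [norm_smul, hw, one_mul] at hv1
    have hueq : A x = w • B x := by
      have hpar := parallelogram_law_with_norm ℂ (A x) (w • B x)
      have hAx2 : ‖A x‖ * ‖A x‖ ≤ 1 :=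
        mul_le_one₀ hu (norm_nonneg _) hu
      have hnn : ‖A x - w • B x‖ = 0 := by
        nlinarith [norm_nonneg (A x - w • B x), hpar, hAx2, hx2, hv1]
      exact sub_eq_zero.mp (norm_eq_zero.mp hnn)
    -- inner product computation
    have hinner : inner ℂ x (S x) = w := by
      rw [hS]
      calc inner ℂ x (((ContinuousLinearMap.adjoint B).comp A) x)
          = (inner ℂ (B x) (A x) : ℂ) := ContinuousLinearMap.adjoint_inner_right B x (A x)
        _ = inner ℂ (B x) (w • B x) := by rw [hueq]
        _ = w * inner ℂ (B x) (B x) := inner_smul_right _ _ _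
        _ = w := by rw [inner_self_eq_norm_sq_to_K, hBx1]; norm_num
    have hSxn : ‖S x‖ ≤ 1 := by
      rw [hS]
      calc ‖(ContinuousLinearMap.adjoint B) (A x)‖
          ≤ ‖ContinuousLinearMap.adjoint B‖ * ‖A x‖ := (ContinuousLinearMap.adjoint B).le_opNorm _
        _ ≤ 1 * 1 := by
            have hadj : ‖ContinuousLinearMap.adjoint B‖ = ‖B‖ :=
              ContinuousLinearMap.adjoint.norm_map B
            rw [hadj, hBn]
            exact mul_le_mul_of_nonneg_left hu zero_le_one
        _ = 1 := one_mul 1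
    refine ⟨x, by simp [← norm_ne_zero_iff, hx1], ?_⟩
    have hre : RCLike.re (inner ℂ (S x) ((w • x : E)) : ℂ) = 1 := by
      rw [inner_smul_right]
      have : (inner ℂ (S x) x : ℂ) = starRingEnd ℂ w := by
        rw [← inner_conj_symm, hinner]
      rw [this, Complex.mul_conj]
      simp [Complex.normSq_eq_norm_sq, hw]
    have hsq := norm_sub_sq (𝕜 := ℂ) (S x) (w • x)
    rw [hre] at hsq
    have hwx : ‖(w • x : E)‖ = 1 := by rw [norm_smul, hw, hx1, one_mul]
    have hSx2 : ‖S x‖ ^ 2 ≤ 1 := pow_le_one₀ (norm_nonneg _) hSxn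
    have h0 : ‖S x - w • x‖ ^ 2 ≤ 0 := by
      rw [hsq, hwx]
      linarith
    have h1 : ‖S x - w • x‖ ^ 2 = 0 := le_antisymm h0 (sq_nonneg _)
    have h3 : ‖S x - w • x‖ = 0 := sq_eq_zero_iff.mp h1
    exact sub_eq_zero.mp (norm_eq_zero.mp h3)
  have hsub : {w : ℂ | ‖w‖ = 1} ⊆ spectrum ℂ (S : E →ₗ[ℂ] E) := by
    intro w hw
    obtain ⟨x, hx0, hx⟩ := key w hw
    rw [← Module.End.hasEigenvalue_iff_mem_spectrum]
    exact Module.End.hasEigenvalue_of_hasEigenvector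
      ⟨Module.End.mem_eigenspace_iff.mpr hx, hx0⟩
  have hfin : {w : ℂ | ‖w‖ = 1}.Finite :=
    (Module.End.finite_spectrum _).subset hsub
  have hinf : {w : ℂ | ‖w‖ = 1}.Infinite := by
    have hinj : Set.InjOn (fun t : ℝ => Complex.exp (t * Complex.I)) (Set.Ioo 0 1) := by
      intro s hs t ht hst
      rw [Complex.exp_eq_exp_iff_exists_int] at hst
      obtain ⟨m, hm⟩ := hst
      have him := congrArg Complex.im hm
      simp [Complex.add_im, Complex.mul_im, Complex.mul_re] at him
      have hm0 : m = 0 := by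
        by_contra h0
        have h1 : (1:ℝ) ≤ |(m:ℝ)| := by exact_mod_cast Int.one_le_abs h0
        have hpi := Real.pi_gt_three
        have hs1 : s < 1 := hs.2
        have hs0 : 0 < s := hs.1
        have ht1 : t < 1 := ht.2
        have ht0 : 0 < t := ht.1
        rcases abs_cases (m:ℝ) with ⟨he, _⟩ | ⟨he, _⟩ <;> nlinarith
      rw [hm0] at him
      simpa using him
    have hmaps : Set.MapsTo (fun t : ℝ => Complex.exp (t * Complex.I)) (Set.Ioo 0 1)
        {w : ℂ | ‖w‖ = 1} := by
      intro t ht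
      simp [Complex.norm_exp]
    exact Set.infinite_of_injOn_mapsTo hinj hmaps (Set.Ioo_infinite zero_lt_one)
  exact hinf hfin

lemma core (k : ℕ) (T₁ T₂ : Matrix (Fin k) (Fin k) ℂ)
    (h : ∀ a₁ a₂ : ℂ, ‖Matrix.toEuclideanCLM (𝕜 := ℂ) (a₁ • T₁ + a₂ • T₂)‖ = ‖a₁‖ + ‖a₂‖) :
    False := by
  have h' : ∀ a₁ a₂ : ℂ, ‖a₁ • (Matrix.toEuclideanCLM (𝕜 := ℂ) T₁)
      + a₂ • (Matrix.toEuclideanCLM (𝕜 := ℂ) T₂)‖ = ‖a₁‖ + ‖a₂‖ := by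
    intro a₁ a₂
    rw [← map_smul, ← map_smul, ← map_add]
    exact h a₁ a₂
  rcases Nat.eq_zero_or_pos k with rfl | hk
  · have hA : ‖Matrix.toEuclideanCLM (𝕜 := ℂ) T₁‖ = 1 := by
      have := h' 1 0
      simp only [one_smul, zero_smul, add_zero, norm_one, norm_zero] at this
      exact this
    have : (Matrix.toEuclideanCLM (𝕜 := ℂ) T₁) = 0 := by
      ext x i
      exact absurd i.2 (by omega)
    rw [this, norm_zero] at hA
    exact zero_ne_one hA
  · haveI : Nonempty (Fin k) := Fin.pos_iff_nonempty.mp hk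
    haveI : Nontrivial (EuclideanSpace ℂ (Fin k)) := by infer_instance
    exact core' _ _ h'

/-- For `n > 1`, there is no linear isometric embedding of `ℓ¹(n)` into the `k×k` complex
matrices with the operator norm; in particular there are no matrices `T₁, T₂` with
`‖a₁T₁ + a₂T₂‖ = |a₁| + |a₂|` for all `a₁, a₂ ∈ ℂ`. -/
theorem stmt15 (n k : ℕ) (hn : 1 < n) :
    (¬ ∃ φ : (Fin n → ℂ) →ₗ[ℂ] Matrix (Fin k) (Fin k) ℂ,
        ∀ a : Fin n → ℂ, ‖Matrix.toEuclideanCLM (𝕜 := ℂ) (φ a)‖ = ∑ i, ‖a i‖) ∧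
      ¬ ∃ T₁ T₂ : Matrix (Fin k) (Fin k) ℂ, ∀ a₁ a₂ : ℂ,
        ‖Matrix.toEuclideanCLM (𝕜 := ℂ) (a₁ • T₁ + a₂ • T₂)‖ = ‖a₁‖ + ‖a₂‖ := by
  constructor
  · rintro ⟨φ, hφ⟩
    set i0 : Fin n := ⟨0, by omega⟩
    set i1 : Fin n := ⟨1, by omega⟩
    have hne : i0 ≠ i1 := by simp [i0, i1, Fin.ext_iff]
    refine core k (φ (Pi.single i0 1)) (φ (Pi.single i1 1)) ?_
    intro a₁ a₂
    have heq : a₁ • φ (Pi.single i0 1) + a₂ • φ (Pi.single i1 1)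
        = φ ((Pi.single i0 a₁ + Pi.single i1 a₂ : Fin n → ℂ)) := by
      rw [← map_smul, ← map_smul, ← map_add]
      congr 1
      ext i
      simp [Pi.single_apply]
    rw [heq, hφ]
    have hpt : ∀ i : Fin n, ‖(Pi.single i0 a₁ + Pi.single i1 a₂ : Fin n → ℂ) i‖
        = (Pi.single i0 ‖a₁‖ : Fin n → ℝ) i + (Pi.single i1 ‖a₂‖ : Fin n → ℝ) i := by
      intro i
      by_cases h0 : i = i0
      · subst h0
        simp [Pi.single_eq_same, Pi.single_eq_of_ne hne, Pi.single_eq_of_ne' hne]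
      · by_cases h1 : i = i1
        · subst h1
          simp [Pi.single_eq_same, Pi.single_eq_of_ne h0]
        · simp [Pi.single_eq_of_ne h0, Pi.single_eq_of_ne h1]
    simp_rw [hpt]
    rw [Finset.sum_add_distrib]
    simp [Finset.sum_pi_single']
  · rintro ⟨T₁, T₂, h⟩
    exact core k T₁ T₂ h
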